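/- arXiv:1707.02940 — 2 statements merged into one kernel-verified Lean document; each statement's English description precedes it below -/
import Mathlib

section
/- The function g(z) = z tan²(z) − 2(tan(z) − z) satisfies: g ≥ 0 on (0, π/2), g is increasing on (0, π/2), and there exists a unique s_c ∈ (0, 1.225) with g(s_c) = 2π; moreover g(1.225) > 2π. -/
open Real


set_option maxHeartbeats 1000000 in
lemma sin_cos_1225 :
    (0.940466 : ℝ) ≤ Real.sin 1.225 ∧ (0.338655 : ℝ) ≤ Real.cos 1.225 ∧
      Real.cos 1.225 ≤ 0.339307 := by
  have habs : |(0.153125 : ℝ)| = 0.153125 := abs_of_pos (by norm_num)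
  have hs := abs_le.mp (Real.sin_bound (le_of_eq_of_le habs (by norm_num)))
  rw [habs] at hs
  have hc := abs_le.mp (Real.cos_bound (le_of_eq_of_le habs (by norm_num)))
  rw [habs] at hc
  have hs1l : (0.152497 : ℝ) ≤ Real.sin 0.153125 := by nlinarith [hs.1]
  have hs1u : Real.sin 0.153125 ≤ 0.152556 := by nlinarith [hs.2]
  have hc1l : (0.988247 : ℝ) ≤ Real.cos 0.153125 := by nlinarith [hc.1]
  have hc1u : Real.cos 0.153125 ≤ 0.988306 := by nlinarith [hc.2]
  have h0s1 : (0 : ℝ) ≤ Real.sin 0.153125 := by linarith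
  have h0c1 : (0 : ℝ) ≤ Real.cos 0.153125 := by linarith
  have e2 : (0.30625 : ℝ) = 2 * 0.153125 := by norm_num
  have hs2 : Real.sin 0.30625 = 2 * Real.sin 0.153125 * Real.cos 0.153125 := by
    rw [e2, Real.sin_two_mul]
  have hc2 : Real.cos 0.30625 = 1 - 2 * Real.sin 0.153125 ^ 2 := by
    rw [e2, Real.cos_two_mul']
    nlinarith [Real.sin_sq_add_cos_sq (0.153125 : ℝ)]
  have hs2l : (0.301409 : ℝ) ≤ Real.sin 0.30625 := by
    rw [hs2]
    nlinarith [mul_le_mul hs1l hc1l (by norm_num : (0:ℝ) ≤ 0.988247) h0s1]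
  have hs2u : Real.sin 0.30625 ≤ 0.301545 := by
    rw [hs2]
    nlinarith [mul_le_mul hs1u hc1u h0c1 (by norm_num : (0:ℝ) ≤ 0.152556)]
  have hc2l : (0.953453 : ℝ) ≤ Real.cos 0.30625 := by
    rw [hc2]
    nlinarith [pow_le_pow_left₀ h0s1 hs1u 2]
  have hc2u : Real.cos 0.30625 ≤ 0.953490 := by
    rw [hc2]
    nlinarith [pow_le_pow_left₀ (by norm_num : (0:ℝ) ≤ 0.152497) hs1l 2]
  have h0s2 : (0 : ℝ) ≤ Real.sin 0.30625 := by linarith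
  have h0c2 : (0 : ℝ) ≤ Real.cos 0.30625 := by linarith
  have e4 : (0.6125 : ℝ) = 2 * 0.30625 := by norm_num
  have hs4 : Real.sin 0.6125 = 2 * Real.sin 0.30625 * Real.cos 0.30625 := by
    rw [e4, Real.sin_two_mul]
  have hc4 : Real.cos 0.6125 = 1 - 2 * Real.sin 0.30625 ^ 2 := by
    rw [e4, Real.cos_two_mul']
    nlinarith [Real.sin_sq_add_cos_sq (0.30625 : ℝ)]
  have hs4l : (0.574758 : ℝ) ≤ Real.sin 0.6125 := by
    rw [hs4]
    nlinarith [mul_le_mul hs2l hc2l (by norm_num : (0:ℝ) ≤ 0.953453) h0s2]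
  have hs4u : Real.sin 0.6125 ≤ 0.575041 := by
    rw [hs4]
    nlinarith [mul_le_mul hs2u hc2u h0c2 (by norm_num : (0:ℝ) ≤ 0.301545)]
  have hc4l : (0.818141 : ℝ) ≤ Real.cos 0.6125 := by
    rw [hc4]
    nlinarith [pow_le_pow_left₀ h0s2 hs2u 2]
  have hc4u : Real.cos 0.6125 ≤ 0.818306 := by
    rw [hc4]
    nlinarith [pow_le_pow_left₀ (by norm_num : (0:ℝ) ≤ 0.301409) hs2l 2]
  have h0s4 : (0 : ℝ) ≤ Real.sin 0.6125 := by linarith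
  have h0c4 : (0 : ℝ) ≤ Real.cos 0.6125 := by linarith
  have e8 : (1.225 : ℝ) = 2 * 0.6125 := by norm_num
  have hs8 : Real.sin 1.225 = 2 * Real.sin 0.6125 * Real.cos 0.6125 := by
    rw [e8, Real.sin_two_mul]
  have hc8 : Real.cos 1.225 = 1 - 2 * Real.sin 0.6125 ^ 2 := by
    rw [e8, Real.cos_two_mul']
    nlinarith [Real.sin_sq_add_cos_sq (0.6125 : ℝ)]
  refine ⟨?_, ?_, ?_⟩
  · rw [hs8]
    nlinarith [mul_le_mul hs4l hc4l (by norm_num : (0:ℝ) ≤ 0.818141) h0s4]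
  · rw [hc8]
    nlinarith [pow_le_pow_left₀ h0s4 hs4u 2]
  · rw [hc8]
    nlinarith [pow_le_pow_left₀ (by norm_num : (0:ℝ) ≤ 0.574758) hs4l 2]

lemma tan_1225 : (2.7717 : ℝ) < Real.tan 1.225 := by
  obtain ⟨hs, hcl, hcu⟩ := sin_cos_1225
  have hcpos : (0 : ℝ) < Real.cos 1.225 := by linarith
  rw [Real.tan_eq_sin_div_cos, lt_div_iff₀ hcpos]
  nlinarith


/-- the function `g(z) = z tan²(z) - 2(tan(z) - z)` is nonnegative and
increasing on `(0, π/2)`, there is a unique `s_c ∈ (0, 1.225)` with `g(s_c) = 2π`, and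
`g(1.225) > 2π`. -/
theorem g_properties :
    (∀ z ∈ Set.Ioo (0 : ℝ) (π / 2), 0 ≤ z * Real.tan z ^ 2 - 2 * (Real.tan z - z))
    ∧ StrictMonoOn (fun z : ℝ => z * Real.tan z ^ 2 - 2 * (Real.tan z - z))
        (Set.Ioo (0 : ℝ) (π / 2))
    ∧ (∃! s : ℝ, s ∈ Set.Ioo (0 : ℝ) 1.225
        ∧ s * Real.tan s ^ 2 - 2 * (Real.tan s - s) = 2 * π)
    ∧ 2 * π < 1.225 * Real.tan 1.225 ^ 2 - 2 * (Real.tan 1.225 - 1.225) := by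
  have hpi2 : (0 : ℝ) < π / 2 := by positivity
  set f : ℝ → ℝ := fun z => z * Real.tan z ^ 2 - 2 * (Real.tan z - z) with hfdef
  have hsub : Set.Ico (0 : ℝ) (π / 2) ⊆ Set.Ioo (-(π / 2)) (π / 2) := by
    intro x hx
    exact ⟨lt_of_lt_of_le (by linarith) hx.1, hx.2⟩
  have hcont : ContinuousOn f (Set.Ico 0 (π / 2)) := by
    have htan : ContinuousOn Real.tan (Set.Ico (0 : ℝ) (π / 2)) :=
      Real.continuousOn_tan_Ioo.mono hsub
    exact (continuousOn_id.mul (htan.pow 2)).sub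
      (continuousOn_const.mul (htan.sub continuousOn_id))
  have hderiv : ∀ x ∈ interior (Set.Ico (0 : ℝ) (π / 2)), 0 < deriv f x := by
    intro x hx
    rw [interior_Ico] at hx
    have hcpos : 0 < Real.cos x :=
      Real.cos_pos_of_mem_Ioo ⟨by linarith [hx.1], hx.2⟩
    have hc0 : Real.cos x ≠ 0 := ne_of_gt hcpos
    have ht : HasDerivAt Real.tan (1 / Real.cos x ^ 2) x := Real.hasDerivAt_tan hc0
    have hder : HasDerivAt f
        (1 * Real.tan x ^ 2 + x * (2 * Real.tan x ^ 1 * (1 / Real.cos x ^ 2))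
          - 2 * (1 / Real.cos x ^ 2 - 1)) x :=
      ((hasDerivAt_id x).mul (ht.pow 2)).sub ((ht.sub (hasDerivAt_id x)).const_mul 2)
    rw [hder.deriv]
    have htp : 0 < Real.tan x := Real.tan_pos_of_pos_of_lt_pi_div_two hx.1 hx.2
    have hsin : Real.sin x = Real.tan x * Real.cos x := by
      rw [Real.tan_eq_sin_div_cos]; field_simp
    have hc2 : (1 + Real.tan x ^ 2) * Real.cos x ^ 2 = 1 := by
      have h := Real.sin_sq_add_cos_sq x
      rw [hsin] at h
      linear_combination h
    have h1 : 1 / Real.cos x ^ 2 = 1 + Real.tan x ^ 2 := by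
      field_simp at hc2 ⊢
      linarith [hc2]
    rw [h1]
    have hscos : Real.sin x * Real.cos x < x := by
      have h2x := Real.sin_lt (by linarith [hx.1] : 0 < 2 * x)
      rw [Real.sin_two_mul] at h2x
      linarith
    -- from hscos and hsin, hc2 : tan x < x * (1 + tan x ^ 2)
    have hkey : Real.tan x < x * (1 + Real.tan x ^ 2) := by
      have h1t : (0 : ℝ) < 1 + Real.tan x ^ 2 := by positivity
      have := mul_lt_mul_of_pos_right hscos h1t
      calc Real.tan x = Real.sin x * Real.cos x * (1 + Real.tan x ^ 2) := by
            rw [hsin]; nlinarith [hc2]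
        _ < x * (1 + Real.tan x ^ 2) := this
    nlinarith [mul_lt_mul_of_pos_left hkey htp, sq_nonneg (Real.tan x)]
  have hmono : StrictMonoOn f (Set.Ico 0 (π / 2)) :=
    strictMonoOn_of_deriv_pos (convex_Ico _ _) hcont hderiv
  have hf0 : f 0 = 0 := by simp [hfdef, Real.tan_zero]
  have hmonoIoo : StrictMonoOn f (Set.Ioo (0 : ℝ) (π / 2)) :=
    hmono.mono Set.Ioo_subset_Ico_self
  have hpi_gt : (3 : ℝ) < π := Real.pi_gt_three
  have hpi_lt : π < 3.15 := Real.pi_lt_d2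
  -- part 4
  have htan := tan_1225
  have hpart4 : 2 * π < 1.225 * Real.tan 1.225 ^ 2 - 2 * (Real.tan 1.225 - 1.225) := by
    nlinarith [sq_nonneg (Real.tan 1.225 - 2.7717)]
  have h1225 : (1.225 : ℝ) < π / 2 := by linarith
  refine ⟨?_, hmonoIoo, ?_, hpart4⟩
  · intro z hz
    have := hmono (Set.left_mem_Ico.mpr hpi2) ⟨le_of_lt hz.1, hz.2⟩ hz.1
    rw [hf0] at this
    exact le_of_lt this
  · -- existence via IVT on [π/4, 1.225]
    have hq1 : π / 4 < 1.225 := by linarith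
    have hIccsub : Set.Icc (π / 4) 1.225 ⊆ Set.Ico (0 : ℝ) (π / 2) := by
      intro x hx
      constructor
      · linarith [hx.1]
      · linarith [hx.2]
    have hfq : f (π / 4) = 3 * π / 4 - 2 := by
      simp only [hfdef, Real.tan_pi_div_four]
      ring
    have hmem : 2 * π ∈ Set.Ioo (f (π / 4)) (f 1.225) := by
      constructor
      · rw [hfq]; linarith
      · exact hpart4
    obtain ⟨s, hsmem, hfs⟩ :=
      intermediate_value_Ioo (le_of_lt hq1) (hcont.mono hIccsub) hmem
    have hs0 : s ∈ Set.Ioo (0 : ℝ) 1.225 := ⟨by linarith [hsmem.1], hsmem.2⟩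
    refine ⟨s, ⟨hs0, hfs⟩, ?_⟩
    intro t ⟨htmem, htval⟩
    have hmemIoo : ∀ u : ℝ, u ∈ Set.Ioo (0 : ℝ) 1.225 → u ∈ Set.Ioo (0 : ℝ) (π / 2) :=
      fun u hu => ⟨hu.1, lt_trans hu.2 h1225⟩
    exact hmonoIoo.injOn (hmemIoo t htmem) (hmemIoo s hs0) (htval.trans hfs.symm)
end

section
/- There is a unique pair (s₀, Λ) with s₀ ∈ (1.21, 1.215) and Λ ∈ (3.79, 3.82) satisfying tan(Λ s₀)/(Λ s₀) = tan(s₀)/s₀ with Λs₀ ∈ (π, 3π/2), and Λ² = (2π + tan(s₀) − s₀)/(2π − (s₀ tan²(s₀) − 2(tan(s₀) − s₀))). -/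
open Real Set

namespace Stmt16

private lemma nonneg_aux (f f' : ℝ → ℝ) (hd : ∀ y : ℝ, HasDerivAt f (f' y) y)
    (h0 : f 0 = 0) (hf' : ∀ y : ℝ, 0 ≤ y → 0 ≤ f' y) {x : ℝ} (hx : 0 ≤ x) : 0 ≤ f x := by
  have hmono : MonotoneOn f (Icc 0 x) := by
    apply monotoneOn_of_deriv_nonneg (convex_Icc 0 x)
    · exact fun y _ => (hd y).continuousAt.continuousWithinAt
    · exact fun y _ => (hd y).differentiableAt.differentiableWithinAt
    · intro y hy
      rw [interior_Icc] at hy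
      rw [(hd y).deriv]
      exact hf' y hy.1.le
  have h := hmono ⟨le_refl 0, hx⟩ ⟨hx, le_refl x⟩ hx
  rw [h0] at h
  exact h

private lemma T1 {x : ℝ} (hx : 0 ≤ x) : sin x ≤ x := by
  have h := nonneg_aux (fun y => y - sin y) (fun y => 1 - cos y)
    (fun y => ((hasDerivAt_id y).sub (hasDerivAt_sin y)))
    (by simp) (fun y _ => show (0:ℝ) ≤ 1 - cos y by nlinarith [cos_le_one y]) hx
  simpa using h

private lemma T2 {x : ℝ} (hx : 0 ≤ x) : 1 - x^2/2 ≤ cos x := by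
  have h := nonneg_aux (fun y => cos y - (1 - y^2/2)) (fun y => y - sin y)
    (fun y => by
      have := (hasDerivAt_cos y).sub (((hasDerivAt_pow 2 y).div_const 2).const_sub 1)
      exact this.congr_deriv (by push_cast; ring))
    (by norm_num) (fun y hy => show (0:ℝ) ≤ y - sin y by nlinarith [T1 hy]) hx
  linarith [h]

private lemma T3 {x : ℝ} (hx : 0 ≤ x) : x - x^3/6 ≤ sin x := by
  have h := nonneg_aux (fun y => sin y - (y - y^3/6)) (fun y => cos y - (1 - y^2/2))
    (fun y => by
      have := (hasDerivAt_sin y).sub ((hasDerivAt_id y).sub ((hasDerivAt_pow 3 y).div_const 6))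
      exact this.congr_deriv (by push_cast; ring))
    (by norm_num) (fun y hy => show (0:ℝ) ≤ cos y - (1 - y^2/2) by nlinarith [T2 hy]) hx
  linarith [h]

private lemma T4 {x : ℝ} (hx : 0 ≤ x) : cos x ≤ 1 - x^2/2 + x^4/24 := by
  have h := nonneg_aux (fun y => 1 - y^2/2 + y^4/24 - cos y) (fun y => sin y - (y - y^3/6))
    (fun y => by
      have := ((((hasDerivAt_pow 2 y).div_const 2).const_sub 1).add
        ((hasDerivAt_pow 4 y).div_const 24)).sub (hasDerivAt_cos y)
      exact this.congr_deriv (by push_cast; ring))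
    (by norm_num) (fun y hy => show (0:ℝ) ≤ sin y - (y - y^3/6) by nlinarith [T3 hy]) hx
  linarith [h]

private lemma T5 {x : ℝ} (hx : 0 ≤ x) : sin x ≤ x - x^3/6 + x^5/120 := by
  have h := nonneg_aux (fun y => y - y^3/6 + y^5/120 - sin y)
    (fun y => 1 - y^2/2 + y^4/24 - cos y)
    (fun y => by
      have := (((hasDerivAt_id y).sub ((hasDerivAt_pow 3 y).div_const 6)).add
        ((hasDerivAt_pow 5 y).div_const 120)).sub (hasDerivAt_sin y)
      exact this.congr_deriv (by push_cast; ring))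
    (by norm_num) (fun y hy => show (0:ℝ) ≤ 1 - y^2/2 + y^4/24 - cos y by nlinarith [T4 hy]) hx
  linarith [h]

private lemma T6 {x : ℝ} (hx : 0 ≤ x) : 1 - x^2/2 + x^4/24 - x^6/720 ≤ cos x := by
  have h := nonneg_aux (fun y => cos y - (1 - y^2/2 + y^4/24 - y^6/720))
    (fun y => y - y^3/6 + y^5/120 - sin y)
    (fun y => by
      have h2 := (hasDerivAt_cos y).sub
        (((((hasDerivAt_pow 2 y).div_const 2).const_sub 1).add
          ((hasDerivAt_pow 4 y).div_const 24)).sub ((hasDerivAt_pow 6 y).div_const 720))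
      exact h2.congr_deriv (by push_cast; ring))
    (by norm_num) (fun y hy => show (0:ℝ) ≤ y - y^3/6 + y^5/120 - sin y by nlinarith [T5 hy]) hx
  linarith [h]

private lemma T7 {x : ℝ} (hx : 0 ≤ x) : x - x^3/6 + x^5/120 - x^7/5040 ≤ sin x := by
  have h := nonneg_aux (fun y => sin y - (y - y^3/6 + y^5/120 - y^7/5040))
    (fun y => cos y - (1 - y^2/2 + y^4/24 - y^6/720))
    (fun y => by
      have h2 := (hasDerivAt_sin y).sub
        ((((hasDerivAt_id y).sub ((hasDerivAt_pow 3 y).div_const 6)).add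
          ((hasDerivAt_pow 5 y).div_const 120)).sub ((hasDerivAt_pow 7 y).div_const 5040))
      exact h2.congr_deriv (by push_cast; ring))
    (by norm_num) (fun y hy =>
      show (0:ℝ) ≤ cos y - (1 - y^2/2 + y^4/24 - y^6/720) by nlinarith [T6 hy]) hx
  linarith [h]

private lemma T8 {x : ℝ} (hx : 0 ≤ x) : cos x ≤ 1 - x^2/2 + x^4/24 - x^6/720 + x^8/40320 := by
  have h := nonneg_aux (fun y => 1 - y^2/2 + y^4/24 - y^6/720 + y^8/40320 - cos y)
    (fun y => sin y - (y - y^3/6 + y^5/120 - y^7/5040))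
    (fun y => by
      have h2 := ((((((hasDerivAt_pow 2 y).div_const 2).const_sub 1).add
        ((hasDerivAt_pow 4 y).div_const 24)).sub ((hasDerivAt_pow 6 y).div_const 720)).add
        ((hasDerivAt_pow 8 y).div_const 40320)).sub (hasDerivAt_cos y)
      exact h2.congr_deriv (by push_cast; ring))
    (by norm_num) (fun y hy =>
      show (0:ℝ) ≤ sin y - (y - y^3/6 + y^5/120 - y^7/5040) by nlinarith [T7 hy]) hx
  linarith [h]

private lemma T9 {x : ℝ} (hx : 0 ≤ x) :
    sin x ≤ x - x^3/6 + x^5/120 - x^7/5040 + x^9/362880 := by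
  have h := nonneg_aux (fun y => y - y^3/6 + y^5/120 - y^7/5040 + y^9/362880 - sin y)
    (fun y => 1 - y^2/2 + y^4/24 - y^6/720 + y^8/40320 - cos y)
    (fun y => by
      have := (((((hasDerivAt_id y).sub ((hasDerivAt_pow 3 y).div_const 6)).add
        ((hasDerivAt_pow 5 y).div_const 120)).sub ((hasDerivAt_pow 7 y).div_const 5040)).add
        ((hasDerivAt_pow 9 y).div_const 362880)).sub (hasDerivAt_sin y)
      exact this.congr_deriv (by push_cast; ring))
    (by norm_num) (fun y hy =>
      show (0:ℝ) ≤ 1 - y^2/2 + y^4/24 - y^6/720 + y^8/40320 - cos y by nlinarith [T8 hy]) hx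
  linarith [h]


private lemma T10 {x : ℝ} (hx : 0 ≤ x) :
    1 - x^2/2 + x^4/24 - x^6/720 + x^8/40320 - x^10/3628800 ≤ cos x := by
  have h := nonneg_aux
    (fun y => cos y - (1 - y^2/2 + y^4/24 - y^6/720 + y^8/40320 - y^10/3628800))
    (fun y => y - y^3/6 + y^5/120 - y^7/5040 + y^9/362880 - sin y)
    (fun y => by
      have h2 := (hasDerivAt_cos y).sub
        (((((((hasDerivAt_pow 2 y).div_const 2).const_sub 1).add
          ((hasDerivAt_pow 4 y).div_const 24)).sub ((hasDerivAt_pow 6 y).div_const 720)).add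
          ((hasDerivAt_pow 8 y).div_const 40320)).sub ((hasDerivAt_pow 10 y).div_const 3628800))
      exact h2.congr_deriv (by push_cast; ring))
    (by norm_num) (fun y hy =>
      show (0:ℝ) ≤ y - y^3/6 + y^5/120 - y^7/5040 + y^9/362880 - sin y by nlinarith [T9 hy]) hx
  linarith [h]

private lemma T11 {x : ℝ} (hx : 0 ≤ x) :
    x - x^3/6 + x^5/120 - x^7/5040 + x^9/362880 - x^11/39916800 ≤ sin x := by
  have h := nonneg_aux
    (fun y => sin y - (y - y^3/6 + y^5/120 - y^7/5040 + y^9/362880 - y^11/39916800))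
    (fun y => cos y - (1 - y^2/2 + y^4/24 - y^6/720 + y^8/40320 - y^10/3628800))
    (fun y => by
      have h2 := (hasDerivAt_sin y).sub
        ((((((hasDerivAt_id y).sub ((hasDerivAt_pow 3 y).div_const 6)).add
          ((hasDerivAt_pow 5 y).div_const 120)).sub ((hasDerivAt_pow 7 y).div_const 5040)).add
          ((hasDerivAt_pow 9 y).div_const 362880)).sub ((hasDerivAt_pow 11 y).div_const 39916800))
      exact h2.congr_deriv (by push_cast; ring))
    (by norm_num) (fun y hy =>
      show (0:ℝ) ≤ cos y - (1 - y^2/2 + y^4/24 - y^6/720 + y^8/40320 - y^10/3628800) by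
        nlinarith [T10 hy]) hx
  linarith [h]


private lemma pi1 : (3.141592:ℝ) < π := pi_gt_d6
private lemma pi2 : π < 3.141593 := pi_lt_d6

private lemma cos_pos_aux {x : ℝ} (h0 : 0 ≤ x) (h1 : x ≤ 1.55) : 0 < cos x :=
  cos_pos_of_mem_Ioo ⟨by nlinarith [pi1], by nlinarith [pi1]⟩

/-- lower bound for tan at a rational point -/
private lemma tan_gt {r c : ℝ} (h0 : 0 ≤ r) (h1 : r ≤ 1.55) (hc : 0 ≤ c)
    (h : c * (1 - r^2/2 + r^4/24 - r^6/720 + r^8/40320) <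
         r - r^3/6 + r^5/120 - r^7/5040 + r^9/362880 - r^11/39916800) :
    c < tan r := by
  have hcos : 0 < cos r := cos_pos_aux h0 h1
  rw [tan_eq_sin_div_cos, lt_div_iff₀ hcos]
  calc c * cos r ≤ c * (1 - r^2/2 + r^4/24 - r^6/720 + r^8/40320) :=
        mul_le_mul_of_nonneg_left (T8 h0) hc
    _ < r - r^3/6 + r^5/120 - r^7/5040 + r^9/362880 - r^11/39916800 := h
    _ ≤ sin r := T11 h0

/-- upper bound for tan at a rational point -/
private lemma tan_lt {r c : ℝ} (h0 : 0 ≤ r) (h1 : r ≤ 1.55) (hc : 0 ≤ c)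
    (h : r - r^3/6 + r^5/120 - r^7/5040 + r^9/362880 <
         c * (1 - r^2/2 + r^4/24 - r^6/720 + r^8/40320 - r^10/3628800)) :
    tan r < c := by
  have hcos : 0 < cos r := cos_pos_aux h0 h1
  rw [tan_eq_sin_div_cos, div_lt_iff₀ hcos]
  calc sin r ≤ r - r^3/6 + r^5/120 - r^7/5040 + r^9/362880 := T9 h0
    _ < c * (1 - r^2/2 + r^4/24 - r^6/720 + r^8/40320 - r^10/3628800) := h
    _ ≤ c * cos r := mul_le_mul_of_nonneg_left (T10 h0) hc

private lemma ta_lb : (2.6731904:ℝ) < tan 1.21283 :=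
  tan_gt (by norm_num) (by norm_num) (by norm_num) (by norm_num)
private lemma ta_ub : tan 1.21283 < 2.6732056 :=
  tan_lt (by norm_num) (by norm_num) (by norm_num) (by norm_num)
private lemma tb_lb : (2.6739237:ℝ) < tan 1.21292 :=
  tan_gt (by norm_num) (by norm_num) (by norm_num) (by norm_num)
private lemma tb_ub : tan 1.21292 < 2.6739389 :=
  tan_lt (by norm_num) (by norm_num) (by norm_num) (by norm_num)
private lemma t215_ub : tan 1.215 < 2.71 :=
  tan_lt (by norm_num) (by norm_num) (by norm_num) (by norm_num)
private lemma tva_ub : tan 1.464008642 < 9.34 :=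
  tan_lt (by norm_num) (by norm_num) (by norm_num) (by norm_num)
private lemma tvb_lb : (11.205:ℝ) < tan 1.481815456 :=
  tan_gt (by norm_num) (by norm_num) (by norm_num) (by norm_num)

private lemma c215_lb : (0.34:ℝ) < cos 1.215 :=
  lt_of_lt_of_le (by norm_num) (T10 (by norm_num))
private lemma cw2_lb : (0.07:ℝ) < cos 1.500538 :=
  lt_of_lt_of_le (by norm_num) (T10 (by norm_num))
private lemma cw1_ub : cos 1.444307 < 0.1264 :=
  lt_of_le_of_lt (T8 (by norm_num)) (by norm_num)



noncomputable def Nf (s : ℝ) : ℝ := 2 * π + tan s - s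
noncomputable def Df (s : ℝ) : ℝ := 2 * π - (s * tan s ^ 2 - 2 * (tan s - s))
noncomputable def lam (s : ℝ) : ℝ := √(Nf s / Df s)
noncomputable def gfun (s : ℝ) : ℝ := tan (lam s * s) * s - tan s * (lam s * s)

private lemma box {s : ℝ} (h1 : 1.21 ≤ s) (h2 : s ≤ 1.215) :
    0 < cos s ∧ 1 < tan s ∧ tan s < 2.71 ∧ 0 < Df s ∧ 0 < Nf s := by
  have hs2 : s < π/2 := by nlinarith [pi1]
  have hc : 0 < cos s := cos_pos_of_mem_Ioo ⟨by nlinarith [pi1], hs2⟩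
  have ht1 : 1 < tan s := by
    have h := tan_lt_tan_of_nonneg_of_lt_pi_div_two
      (by positivity : (0:ℝ) ≤ π/4) hs2 (by nlinarith [pi2] : π/4 < s)
    rwa [tan_pi_div_four] at h
  have ht2 : tan s < 2.71 := by
    rcases eq_or_lt_of_le h2 with h | h
    · rw [h]; exact t215_ub
    · exact lt_trans (tan_lt_tan_of_nonneg_of_lt_pi_div_two (by linarith)
        (by nlinarith [pi1]) h) t215_ub
  refine ⟨hc, ht1, ht2, ?_, ?_⟩
  · unfold Df
    nlinarith [pi1, mul_pos (sub_pos.2 ht2) (sub_pos.2 ht1),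
      mul_nonneg (by linarith : (0:ℝ) ≤ 1.215 - s) (sq_nonneg (tan s))]
  · unfold Nf; nlinarith [pi1]

private lemma tan_sub_strict : StrictMonoOn (fun y => tan y - y) (Icc (1.21:ℝ) 1.215) := by
  apply strictMonoOn_of_deriv_pos (convex_Icc _ _)
  · exact (Real.continuousOn_tan.mono
      (fun y hy => (box hy.1 hy.2).1.ne')).sub continuousOn_id
  · intro y hy
    rw [interior_Icc] at hy
    obtain ⟨hc, -, -, -, -⟩ := box hy.1.le hy.2.le
    have hd : HasDerivAt (fun y => tan y - y) (1 / cos y ^ 2 - 1) y :=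
      (hasDerivAt_tan hc.ne').sub (hasDerivAt_id y)
    rw [hd.deriv]
    have hcos1 : cos y < 1 := by
      have h := cos_lt_cos_of_nonneg_of_le_pi (le_refl 0)
        (by nlinarith [pi1, hy.1, hy.2] : y ≤ π) (by linarith [hy.1] : (0:ℝ) < y)
      rwa [cos_zero] at h
    have h1 : 1 < 1 / cos y ^ 2 := by
      rw [lt_div_iff₀ (by positivity)]
      nlinarith
    linarith

private lemma m_strict : StrictMonoOn (fun y => tan y / y) (Icc (1.21:ℝ) 1.215) := by
  apply strictMonoOn_of_deriv_pos (convex_Icc _ _)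
  · exact (Real.continuousOn_tan.mono (fun y hy => (box hy.1 hy.2).1.ne')).div
      continuousOn_id (fun y hy => ne_of_gt (show (0:ℝ) < id y by simp only [id_eq]; linarith [hy.1]))
  · intro y hy
    rw [interior_Icc] at hy
    obtain ⟨hc, ht1, -, -, -⟩ := box hy.1.le hy.2.le
    have hy0 : (0:ℝ) < y := by linarith [hy.1]
    have hd : HasDerivAt (fun y => tan y / y) ((1 / cos y ^ 2 * y - tan y * 1) / y ^ 2) y :=
      (hasDerivAt_tan hc.ne').div (hasDerivAt_id y) hy0.ne'
    rw [hd.deriv]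
    apply div_pos _ (by positivity)
    have hsc : sin y * cos y < y := by
      nlinarith [sin_le_one y, cos_le_one y, sin_nonneg_of_nonneg_of_le_pi
        (by linarith [hy.1] : (0:ℝ) ≤ y) (by nlinarith [pi1, hy.1, hy.2] : y ≤ π), hc, hy.1]
    rw [tan_eq_sin_div_cos, mul_one]
    rw [sub_pos, div_lt_iff₀ hc]
    have heq : 1 / cos y ^ 2 * y * cos y = y / cos y := by
      field_simp
    rw [heq, lt_div_iff₀ hc]
    nlinarith [hc]

private lemma m_lip {s s' : ℝ} (hs : s ∈ Icc (1.21:ℝ) 1.215) (hs' : s' ∈ Icc (1.21:ℝ) 1.215)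
    (hle : s ≤ s') : tan s' / s' - tan s / s ≤ 7.2 * (s' - s) := by
  have hmono : MonotoneOn (fun y => 7.2 * y - tan y / y) (Icc (1.21:ℝ) 1.215) := by
    apply monotoneOn_of_deriv_nonneg (convex_Icc _ _)
    · exact (continuousOn_const.mul continuousOn_id).sub
        ((Real.continuousOn_tan.mono (fun y hy => (box hy.1 hy.2).1.ne')).div
          continuousOn_id (fun y hy =>
            ne_of_gt (show (0:ℝ) < id y by simp only [id_eq]; linarith [hy.1])))
    · intro y hy
      rw [interior_Icc] at hy
      obtain ⟨hc, -, -, -, -⟩ := box hy.1.le hy.2.le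
      exact (((hasDerivAt_id y).const_mul 7.2).sub
        ((hasDerivAt_tan hc.ne').div (hasDerivAt_id y)
          (by linarith [hy.1] : (0:ℝ) < y).ne')).differentiableAt.differentiableWithinAt
    · intro y hy
      rw [interior_Icc] at hy
      obtain ⟨hc, ht1, -, -, -⟩ := box hy.1.le hy.2.le
      have hy0 : (0:ℝ) < y := by linarith [hy.1]
      have hd : HasDerivAt (fun y => 7.2 * y - tan y / y)
          (7.2 * 1 - (1 / cos y ^ 2 * y - tan y * 1) / y ^ 2) y :=
        ((hasDerivAt_id y).const_mul 7.2).sub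
          ((hasDerivAt_tan hc.ne').div (hasDerivAt_id y) hy0.ne')
      rw [hd.deriv, sub_nonneg, div_le_iff₀ (by positivity)]
      -- cos y >= cos 1.215 > 0.34
      have h34 : 0.34 < cos y := by
        have h := cos_le_cos_of_nonneg_of_le_pi (by linarith [hy.1] : (0:ℝ) ≤ y)
          (by nlinarith [pi1] : (1.215:ℝ) ≤ π) hy.2.le
        linarith [c215_lb]
      have hc2 : (0.1156:ℝ) ≤ cos y ^ 2 := by nlinarith
      have h1c : 1 / cos y ^ 2 ≤ 1 / 0.1156 := by
        apply one_div_le_one_div_of_le (by norm_num) hc2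
      have e1 : 1 / cos y ^ 2 * y ≤ 1 / 0.1156 * y :=
        mul_le_mul_of_nonneg_right h1c (by linarith)
      have htpos : 0 < tan y := by linarith
      nlinarith [mul_nonneg (by linarith [hy.1] : (0:ℝ) ≤ y)
        (by linarith [hy.1] : (0:ℝ) ≤ y - 1.21)]
  have h := hmono hs hs' hle
  simp only at h
  linarith


private lemma Lmono {s s' : ℝ} (h1 : 1.21 ≤ s) (h2 : s ≤ 1.215) (h1' : 1.21 ≤ s')
    (h2' : s' ≤ 1.215) (hlt : s < s') : Nf s / Df s < Nf s' / Df s' := by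
  obtain ⟨hc, ht1, ht2, hD, hN⟩ := box h1 h2
  obtain ⟨hc', ht1', ht2', hD', hN'⟩ := box h1' h2'
  have htlt : tan s < tan s' :=
    tan_lt_tan_of_nonneg_of_lt_pi_div_two (by linarith) (by nlinarith [pi1]) hlt
  have hkey : tan s - s < tan s' - s' := by
    have h := tan_sub_strict (Set.mem_Icc.2 ⟨h1, h2⟩) (Set.mem_Icc.2 ⟨h1', h2'⟩) hlt
    simpa using h
  have hX : 0 < Nf s' - Nf s := by unfold Nf; linarith
  have hY : 0 < Df s - Df s' := by
    unfold Df
    nlinarith [mul_pos (sub_pos.2 htlt)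
      (show (0:ℝ) < s' * (tan s' + tan s) - 2 by nlinarith),
      mul_nonneg (by linarith : (0:ℝ) ≤ s' - s) (sq_nonneg (tan s))]
  rw [div_lt_div_iff₀ hD hD']
  nlinarith [mul_pos hN hY, mul_pos hX hD', mul_pos hX hY]

private lemma Lmono_le {s s' : ℝ} (h1 : 1.21 ≤ s) (h2 : s ≤ 1.215) (h1' : 1.21 ≤ s')
    (h2' : s' ≤ 1.215) (hle : s ≤ s') : Nf s / Df s ≤ Nf s' / Df s' := by
  rcases eq_or_lt_of_le hle with h | h
  · rw [h]
  · exact (Lmono h1 h2 h1' h2' h).le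

private lemma ubox {y : ℝ} (h1 : 4.5859 ≤ y) (h2 : y ≤ 4.64213) :
    -0.1264 ≤ cos y ∧ cos y ≤ -0.07 ∧ 0 < tan y ∧ tan y < 14.2858 := by
  have hy' : y = (y - π) + π := by ring
  have hw1 : 1.444307 ≤ y - π := by linarith [pi2]
  have hw2 : y - π ≤ 1.500538 := by linarith [pi1]
  have hcy : cos y = -cos (y - π) := by
    conv_lhs => rw [hy']
    exact Real.cos_add_pi _
  have htp : tan y = tan (y - π) := by
    conv_lhs => rw [hy']
    exact Real.tan_periodic _
  have hcw_lb : 0.07 < cos (y - π) := by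
    have h := cos_le_cos_of_nonneg_of_le_pi (by linarith : (0:ℝ) ≤ y - π)
      (by nlinarith [pi1] : (1.500538:ℝ) ≤ π) hw2
    linarith [cw2_lb]
  have hcw_ub : cos (y - π) < 0.1264 := by
    have h := cos_le_cos_of_nonneg_of_le_pi (by norm_num : (0:ℝ) ≤ (1.444307:ℝ))
      (by nlinarith [pi1] : y - π ≤ π) hw1
    linarith [cw1_ub]
  have hsw1 : sin (y - π) ≤ 1 := sin_le_one _
  have hswpos : 0 < sin (y - π) :=
    sin_pos_of_pos_of_lt_pi (by linarith) (by nlinarith [pi1])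
  have htw : tan (y - π) = sin (y - π) / cos (y - π) := tan_eq_sin_div_cos _
  refine ⟨by rw [hcy]; linarith, by rw [hcy]; linarith, ?_, ?_⟩
  · rw [htp, htw]
    exact div_pos hswpos (by linarith)
  · rw [htp, htw, div_lt_iff₀ (by linarith)]
    nlinarith

private lemma mt_lip {u u' : ℝ} (hu : u ∈ Icc (4.5859:ℝ) 4.64213)
    (hu' : u' ∈ Icc (4.5859:ℝ) 4.64213) (hle : u ≤ u') :
    11 * (u' - u) ≤ tan u' / u' - tan u / u := by
  have hcosne : ∀ y ∈ Icc (4.5859:ℝ) 4.64213, cos y ≠ 0 := fun y hy =>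
    ne_of_lt (lt_of_le_of_lt (ubox hy.1 hy.2).2.1 (by norm_num))
  have hmono : MonotoneOn (fun y => tan y / y - 11 * y) (Icc (4.5859:ℝ) 4.64213) := by
    apply monotoneOn_of_deriv_nonneg (convex_Icc _ _)
    · exact ((Real.continuousOn_tan.mono hcosne).div continuousOn_id
        (fun y hy => ne_of_gt (show (0:ℝ) < id y by simp only [id_eq]; linarith [hy.1]))).sub
        (continuousOn_const.mul continuousOn_id)
    · intro y hy
      rw [interior_Icc] at hy
      exact (((hasDerivAt_tan (hcosne y ⟨hy.1.le, hy.2.le⟩)).div (hasDerivAt_id y)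
        (by linarith [hy.1] : (0:ℝ) < y).ne').sub
        ((hasDerivAt_id y).const_mul 11)).differentiableAt.differentiableWithinAt
    · intro y hy
      rw [interior_Icc] at hy
      obtain ⟨hcl, hcu, htpos, htub⟩ := ubox hy.1.le hy.2.le
      have hcne : cos y ≠ 0 := hcosne y ⟨hy.1.le, hy.2.le⟩
      have hy0 : (0:ℝ) < y := by linarith [hy.1]
      have hd : HasDerivAt (fun y => tan y / y - 11 * y)
          ((1 / cos y ^ 2 * y - tan y * 1) / y ^ 2 - 11 * 1) y :=
        ((hasDerivAt_tan hcne).div (hasDerivAt_id y) hy0.ne').sub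
          ((hasDerivAt_id y).const_mul 11)
      rw [hd.deriv, sub_nonneg, le_div_iff₀ (by positivity)]
      have hc2p : 0 < cos y ^ 2 := pow_two_pos_of_ne_zero hcne
      have hc2 : cos y ^ 2 ≤ 0.01597696 := by nlinarith
      have h62 : (62.59:ℝ) ≤ 1 / cos y ^ 2 := by
        rw [le_div_iff₀ hc2p]; nlinarith
      have e1 : 62.59 * y ≤ 1 / cos y ^ 2 * y :=
        mul_le_mul_of_nonneg_right h62 (by linarith [hy.1])
      nlinarith [e1, htub, hy.1, hy.2,
        mul_nonneg (by linarith [hy.1] : (0:ℝ) ≤ 11 * y)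
          (by linarith [hy.2] : (0:ℝ) ≤ 4.64213 - y)]
  have h := hmono hu hu' hle
  simp only at h
  linarith

private lemma La_lb : (3.7969:ℝ)^2 ≤ Nf 1.21283 / Df 1.21283 := by
  obtain ⟨-, -, -, hD, -⟩ := box (s := 1.21283) (by norm_num) (by norm_num)
  rw [le_div_iff₀ hD]
  unfold Nf Df
  nlinarith [pi1, pi2, ta_lb, ta_ub,
    mul_nonneg (by linarith [ta_lb] : (0:ℝ) ≤ tan 1.21283 - 2.6731904)
      (by linarith [ta_ub] : (0:ℝ) ≤ 2.6732056 - tan 1.21283)]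

private lemma La_ub : Nf 1.21283 / Df 1.21283 ≤ (3.7974:ℝ)^2 := by
  obtain ⟨-, -, -, hD, -⟩ := box (s := 1.21283) (by norm_num) (by norm_num)
  rw [div_le_iff₀ hD]
  unfold Nf Df
  nlinarith [pi1, pi2, ta_lb, ta_ub,
    mul_nonneg (by linarith [ta_lb] : (0:ℝ) ≤ tan 1.21283 - 2.6731904)
      (by linarith [ta_ub] : (0:ℝ) ≤ 2.6732056 - tan 1.21283)]

private lemma Lb_lb : (3.8118:ℝ)^2 ≤ Nf 1.21292 / Df 1.21292 := by
  obtain ⟨-, -, -, hD, -⟩ := box (s := 1.21292) (by norm_num) (by norm_num)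
  rw [le_div_iff₀ hD]
  unfold Nf Df
  nlinarith [pi1, pi2, tb_lb, tb_ub,
    mul_nonneg (by linarith [tb_lb] : (0:ℝ) ≤ tan 1.21292 - 2.6739237)
      (by linarith [tb_ub] : (0:ℝ) ≤ 2.6739389 - tan 1.21292)]

private lemma Lb_ub : Nf 1.21292 / Df 1.21292 ≤ (3.8122:ℝ)^2 := by
  obtain ⟨-, -, -, hD, -⟩ := box (s := 1.21292) (by norm_num) (by norm_num)
  rw [div_le_iff₀ hD]
  unfold Nf Df
  nlinarith [pi1, pi2, tb_lb, tb_ub,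
    mul_nonneg (by linarith [tb_lb] : (0:ℝ) ≤ tan 1.21292 - 2.6739237)
      (by linarith [tb_ub] : (0:ℝ) ≤ 2.6739389 - tan 1.21292)]


private lemma lam_sq {s : ℝ} (h1 : 1.21 ≤ s) (h2 : s ≤ 1.215) :
    lam s ^ 2 = Nf s / Df s := by
  obtain ⟨-, -, -, hD, hN⟩ := box h1 h2
  exact Real.sq_sqrt (div_nonneg hN.le hD.le)

private lemma lam_lb_of {s c : ℝ} (hc : 0 ≤ c) (h : c ^ 2 ≤ Nf s / Df s) : c ≤ lam s :=
  (Real.le_sqrt hc (le_trans (by positivity) h)).2 h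

private lemma lam_ub_of {s c : ℝ} (hc : 0 ≤ c) (h : Nf s / Df s ≤ c ^ 2) : lam s ≤ c := by
  have h' := Real.sqrt_le_sqrt h
  rwa [Real.sqrt_sq hc] at h'

private lemma lam_mem {s : ℝ} (hs : s ∈ Icc (1.21283:ℝ) 1.21292) :
    3.7969 ≤ lam s ∧ lam s ≤ 3.8122 := by
  have e1 : (1.21:ℝ) ≤ s := le_trans (by norm_num) hs.1
  have e2 : s ≤ 1.215 := le_trans hs.2 (by norm_num)
  constructor
  · exact lam_lb_of (by norm_num)
      (le_trans La_lb (Lmono_le (by norm_num) (by norm_num) e1 e2 hs.1))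
  · exact lam_ub_of (by norm_num)
      (le_trans (Lmono_le e1 e2 (by norm_num) (by norm_num) hs.2) Lb_ub)

private lemma u_mem {s : ℝ} (hs : s ∈ Icc (1.21283:ℝ) 1.21292) :
    lam s * s ∈ Icc (4.5859:ℝ) 4.64213 := by
  obtain ⟨hl1, hl2⟩ := lam_mem hs
  constructor
  · nlinarith [hs.1, hs.2, mul_nonneg (by linarith : (0:ℝ) ≤ lam s - 3.7969)
      (by linarith [hs.1] : (0:ℝ) ≤ s - 1.21283)]
  · nlinarith [hs.1, hs.2, mul_nonneg (by linarith : (0:ℝ) ≤ 3.8122 - lam s)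
      (by linarith [hs.2] : (0:ℝ) ≤ 1.21292 - s)]

private lemma gcont : ContinuousOn gfun (Icc (1.21283:ℝ) 1.21292) := by
  have hsubbox : Icc (1.21283:ℝ) 1.21292 ⊆ Icc (1.21:ℝ) 1.215 :=
    Icc_subset_Icc (by norm_num) (by norm_num)
  have htan : ContinuousOn tan (Icc (1.21283:ℝ) 1.21292) :=
    Real.continuousOn_tan.mono (fun y hy => (box (hsubbox hy).1 (hsubbox hy).2).1.ne')
  have hN : ContinuousOn Nf (Icc (1.21283:ℝ) 1.21292) := by
    unfold Nf; exact (continuousOn_const.add htan).sub continuousOn_id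
  have hD : ContinuousOn Df (Icc (1.21283:ℝ) 1.21292) := by
    unfold Df
    exact continuousOn_const.sub ((continuousOn_id.mul (htan.pow 2)).sub
      (continuousOn_const.mul (htan.sub continuousOn_id)))
  have hlam : ContinuousOn lam (Icc (1.21283:ℝ) 1.21292) := by
    unfold lam
    exact Real.continuous_sqrt.comp_continuousOn (hN.div hD
      (fun y hy => (box (hsubbox hy).1 (hsubbox hy).2).2.2.2.1.ne'))
  have hu : ContinuousOn (fun s => lam s * s) (Icc (1.21283:ℝ) 1.21292) :=
    hlam.mul continuousOn_id
  have htanu : ContinuousOn (fun s => tan (lam s * s)) (Icc (1.21283:ℝ) 1.21292) := by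
    have hmaps : MapsTo (fun s => lam s * s) (Icc (1.21283:ℝ) 1.21292) {x | cos x ≠ 0} := by
      intro y hy
      have h := u_mem hy
      exact ne_of_lt (lt_of_le_of_lt (ubox h.1 h.2).2.1 (by norm_num))
    have h := Real.continuousOn_tan.comp hu hmaps
    exact h
  unfold gfun
  exact (htanu.mul continuousOn_id).sub (htan.mul hu)

private lemma lam_a_mem : 3.7969 ≤ lam 1.21283 ∧ lam 1.21283 ≤ 3.7974 :=
  ⟨lam_lb_of (by norm_num) La_lb, lam_ub_of (by norm_num) La_ub⟩

private lemma lam_b_mem : 3.8118 ≤ lam 1.21292 ∧ lam 1.21292 ≤ 3.8122 :=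
  ⟨lam_lb_of (by norm_num) Lb_lb, lam_ub_of (by norm_num) Lb_ub⟩

private lemma ga_neg : gfun 1.21283 < 0 := by
  obtain ⟨hl1, hl2⟩ := lam_a_mem
  set u := lam 1.21283 * 1.21283 with hudef
  have hu1 : 4.604994227 ≤ u := by rw [hudef]; nlinarith
  have hu2 : u ≤ 4.605600642 := by rw [hudef]; nlinarith
  have hy' : u = (u - π) + π := by ring
  have htp : tan u = tan (u - π) := by
    conv_lhs => rw [hy']
    exact Real.tan_periodic _
  have hw1 : 0 < u - π := by linarith [pi2]
  have hw2 : u - π ≤ 1.464008642 := by linarith [pi1]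
  have htle : tan (u - π) ≤ tan 1.464008642 := by
    rcases eq_or_lt_of_le hw2 with h | h
    · rw [h]
    · exact (tan_lt_tan_of_nonneg_of_lt_pi_div_two hw1.le
        (by nlinarith [pi1] : (1.464008642:ℝ) < π/2) h).le
  have htu : tan u ≤ 9.34 := by rw [htp]; linarith [tva_ub]
  have hta := ta_lb
  show tan (lam 1.21283 * 1.21283) * 1.21283 - tan 1.21283 * (lam 1.21283 * 1.21283) < 0
  rw [← hudef]
  nlinarith [htu, hta, hu1, hu2, ta_ub,
    mul_nonneg (by linarith : (0:ℝ) ≤ tan 1.21283 - 2.6731904)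
      (by linarith : (0:ℝ) ≤ u - 4.604994227)]

private lemma gb_pos : 0 < gfun 1.21292 := by
  obtain ⟨hl1, hl2⟩ := lam_b_mem
  set u := lam 1.21292 * 1.21292 with hudef
  have hu1 : 4.623408456 ≤ u := by rw [hudef]; nlinarith
  have hu2 : u ≤ 4.623893624 := by rw [hudef]; nlinarith
  have hy' : u = (u - π) + π := by ring
  have htp : tan u = tan (u - π) := by
    conv_lhs => rw [hy']
    exact Real.tan_periodic _
  have hw1 : 1.481815456 ≤ u - π := by linarith [pi2]
  have hw2 : u - π < π/2 := by nlinarith [pi1]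
  have htge : tan 1.481815456 ≤ tan (u - π) := by
    rcases eq_or_lt_of_le hw1 with h | h
    · rw [h]
    · exact (tan_lt_tan_of_nonneg_of_lt_pi_div_two (by norm_num) hw2 h).le
  have htu : 11.205 ≤ tan u := by rw [htp]; linarith [tvb_lb]
  have htb := tb_ub
  have htbpos : 0 < tan 1.21292 := by linarith [tb_lb]
  show 0 < tan (lam 1.21292 * 1.21292) * 1.21292 - tan 1.21292 * (lam 1.21292 * 1.21292)
  rw [← hudef]
  nlinarith [htu, htb, hu1, hu2, tb_lb,
    mul_nonneg (by linarith : (0:ℝ) ≤ 2.6739389 - tan 1.21292)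
      (by linarith : (0:ℝ) ≤ u - 4.623408456)]

private lemma exists_root : ∃ s₀ ∈ Icc (1.21283:ℝ) 1.21292, gfun s₀ = 0 := by
  have h := intermediate_value_Icc (by norm_num : (1.21283:ℝ) ≤ 1.21292) gcont
  have h0 : (0:ℝ) ∈ Icc (gfun 1.21283) (gfun 1.21292) := ⟨ga_neg.le, gb_pos.le⟩
  obtain ⟨s₀, hs₀, hg⟩ := h h0
  exact ⟨s₀, hs₀, hg⟩

private lemma core {s s' Λ Λ' : ℝ} (hs1 : 1.21 < s) (hs2 : s < 1.215)
    (hs1' : 1.21 < s') (hs2' : s' < 1.215)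
    (hΛ1 : 3.79 < Λ) (hΛ2 : Λ < 3.82) (hΛ1' : 3.79 < Λ') (hΛ2' : Λ' < 3.82)
    (he1 : tan (Λ * s) / (Λ * s) = tan s / s)
    (he1' : tan (Λ' * s') / (Λ' * s') = tan s' / s')
    (he2 : Λ ^ 2 = Nf s / Df s) (he2' : Λ' ^ 2 = Nf s' / Df s')
    (hlt : s < s') : False := by
  have hL := Lmono hs1.le hs2.le hs1'.le hs2'.le hlt
  have hΛΛ : Λ < Λ' := by nlinarith
  have hum : Λ * s ∈ Icc (4.5859:ℝ) 4.64213 := by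
    constructor
    · nlinarith [mul_nonneg (by linarith : (0:ℝ) ≤ Λ - 3.79) (by linarith : (0:ℝ) ≤ s - 1.21)]
    · nlinarith [mul_nonneg (by linarith : (0:ℝ) ≤ 3.82 - Λ) (by linarith : (0:ℝ) ≤ 1.215 - s)]
  have hum' : Λ' * s' ∈ Icc (4.5859:ℝ) 4.64213 := by
    constructor
    · nlinarith [mul_nonneg (by linarith : (0:ℝ) ≤ Λ' - 3.79) (by linarith : (0:ℝ) ≤ s' - 1.21)]
    · nlinarith [mul_nonneg (by linarith : (0:ℝ) ≤ 3.82 - Λ') (by linarith : (0:ℝ) ≤ 1.215 - s')]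
  have hm : tan s / s < tan s' / s' :=
    m_strict (Set.mem_Icc.2 ⟨hs1.le, hs2.le⟩) (Set.mem_Icc.2 ⟨hs1'.le, hs2'.le⟩) hlt
  rcases le_or_gt (Λ' * s') (Λ * s) with h | h
  · have h1 := mt_lip hum' hum h
    rw [he1, he1'] at h1
    nlinarith
  · have h1 := mt_lip hum hum' h.le
    have h2 := m_lip (Set.mem_Icc.2 ⟨hs1.le, hs2.le⟩) (Set.mem_Icc.2 ⟨hs1'.le, hs2'.le⟩) hlt.le
    rw [he1, he1'] at h1
    have h3 : 3.79 * (s' - s) < Λ' * s' - Λ * s := by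
      nlinarith [mul_pos (sub_pos.2 hΛΛ) (show (0:ℝ) < s' by linarith)]
    nlinarith

end Stmt16

open Stmt16 in
/-- there is a unique pair `(s₀, Λ)` with `s₀ ∈ (1.21, 1.215)`,
`Λ ∈ (3.79, 3.82)`, `Λs₀ ∈ (π, 3π/2)`, satisfying `tan(Λs₀)/(Λs₀) = tan(s₀)/s₀` and
`Λ² = (2π + tan(s₀) - s₀)/(2π - (s₀ tan²(s₀) - 2(tan(s₀) - s₀)))`. -/
theorem unique_linear_minimizer_parameters :
    ∃! p : ℝ × ℝ,
      p.1 ∈ Set.Ioo (1.21 : ℝ) 1.215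
      ∧ p.2 ∈ Set.Ioo (3.79 : ℝ) 3.82
      ∧ p.2 * p.1 ∈ Set.Ioo π (3 * π / 2)
      ∧ Real.tan (p.2 * p.1) / (p.2 * p.1) = Real.tan p.1 / p.1
      ∧ p.2 ^ 2 = (2 * π + Real.tan p.1 - p.1)
          / (2 * π - (p.1 * Real.tan p.1 ^ 2 - 2 * (Real.tan p.1 - p.1))) := by
  obtain ⟨s₀, hs₀, hg⟩ := Stmt16.exists_root
  have hsl : (1.21:ℝ) ≤ s₀ := le_trans (by norm_num) hs₀.1
  have hsu : s₀ ≤ 1.215 := le_trans hs₀.2 (by norm_num)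
  obtain ⟨hc, ht1, ht2, hD, hN⟩ := Stmt16.box hsl hsu
  obtain ⟨hl1, hl2⟩ := Stmt16.lam_mem hs₀
  have hum := Stmt16.u_mem hs₀
  have hs0pos : (0:ℝ) < s₀ := by linarith
  have hupos : (0:ℝ) < Stmt16.lam s₀ * s₀ := by nlinarith
  have he2 : Stmt16.lam s₀ ^ 2 = Stmt16.Nf s₀ / Stmt16.Df s₀ := Stmt16.lam_sq hsl hsu
  have he1 : Real.tan (Stmt16.lam s₀ * s₀) / (Stmt16.lam s₀ * s₀) = Real.tan s₀ / s₀ := by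
    rw [div_eq_div_iff hupos.ne' hs0pos.ne']
    have hgg : Real.tan (Stmt16.lam s₀ * s₀) * s₀
        - Real.tan s₀ * (Stmt16.lam s₀ * s₀) = 0 := hg
    linarith
  have hw1 : (1.21:ℝ) < s₀ := lt_of_lt_of_le (by norm_num) hs₀.1
  have hw2 : s₀ < 1.215 := lt_of_le_of_lt hs₀.2 (by norm_num)
  have hΛw1 : (3.79:ℝ) < Stmt16.lam s₀ := by linarith
  have hΛw2 : Stmt16.lam s₀ < 3.82 := by linarith
  have he2' : Stmt16.lam s₀ ^ 2 = (2 * π + Real.tan s₀ - s₀)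
      / (2 * π - (s₀ * Real.tan s₀ ^ 2 - 2 * (Real.tan s₀ - s₀))) := by
    unfold Stmt16.Nf Stmt16.Df at he2; exact he2
  refine ⟨⟨s₀, Stmt16.lam s₀⟩, ⟨⟨hw1, hw2⟩, ⟨hΛw1, hΛw2⟩,
    ⟨by have := hum.1; linarith [Stmt16.pi2], by have := hum.2; nlinarith [Stmt16.pi1]⟩,
    he1, he2'⟩, ?_⟩
  rintro ⟨s, Λ⟩ ⟨⟨hq1, hq2⟩, ⟨hq3, hq4⟩, ⟨hq5, hq6⟩, hqe1, hqe2⟩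
  simp only at hq1 hq2 hq3 hq4 hq5 hq6 hqe1 hqe2
  have hqe2' : Λ ^ 2 = Stmt16.Nf s / Stmt16.Df s := by
    unfold Stmt16.Nf Stmt16.Df; exact hqe2
  have key : s = s₀ := by
    rcases lt_trichotomy s s₀ with h | h | h
    · exact (Stmt16.core hq1 hq2 hw1 hw2 hq3 hq4 hΛw1 hΛw2 hqe1 he1 hqe2' he2 h).elim
    · exact h
    · exact (Stmt16.core hw1 hw2 hq1 hq2 hΛw1 hΛw2 hq3 hq4 he1 hqe1 he2 hqe2' h).elim
  subst key
  have h1 : Λ ^ 2 = Stmt16.lam s ^ 2 := by rw [hqe2', he2]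
  have h2 : (Λ - Stmt16.lam s) * (Λ + Stmt16.lam s) = 0 := by linear_combination h1
  rcases mul_eq_zero.1 h2 with h3 | h3
  · have : Λ = Stmt16.lam s := by linarith
    rw [this]
  · exact absurd h3 (by nlinarith)
end
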